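/- arXiv:2603.01709 — 6 statements merged into one kernel-verified Lean document; each statement's English description precedes it below -/
import Mathlib

section
/- Let z(t) solve the extended SAV system d/dt (z, r) = S̃(z) ∇H̃(z, r), where S̃(z) = B(z)ᵀ S B(z) with B(z) = [I a(z)], a(z) = ∇V(z)/(2√(V(z)+C)), and H̃(z,r) = ½ zᵀ M z + r² − C. If S is skew-symmetric, then H̃(z(t), r(t)) is constant in t; if the symmetric part of S is negative semidefinite, then H̃(z(t), r(t)) is nonincreasing in t. -/
open Matrix

noncomputable def dotCLM {n : ℕ} (g : Fin n → ℝ) : (Fin n → ℝ) →L[ℝ] ℝ :=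
  ∑ i, g i • ContinuousLinearMap.proj i

noncomputable def symPart {m : Type*} [Fintype m] (A : Matrix m m ℝ) : Matrix m m ℝ :=
  (1/2 : ℝ) • (A + Aᵀ)

def NegSemidef {m : Type*} [Fintype m] (A : Matrix m m ℝ) : Prop :=
  Aᵀ = A ∧ ∀ x : m → ℝ, x ⬝ᵥ A.mulVec x ≤ 0

noncomputable def savA {n : ℕ} (gradV : (Fin n → ℝ) → (Fin n → ℝ)) (V : (Fin n → ℝ) → ℝ)
    (C : ℝ) (z : Fin n → ℝ) : Fin n → ℝ :=
  (2 * Real.sqrt (V z + C))⁻¹ • gradV z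

/-- `B(z) = [I a(z)]` -/
noncomputable def savB {n : ℕ} (gradV : (Fin n → ℝ) → (Fin n → ℝ)) (V : (Fin n → ℝ) → ℝ)
    (C : ℝ) (z : Fin n → ℝ) : Matrix (Fin n) (Fin n ⊕ Unit) ℝ :=
  Matrix.fromCols 1 (Matrix.replicateCol Unit (savA gradV V C z))

/-- the SAV extended structure matrix `S̃(z) = B(z)ᵀ S B(z)` -/
noncomputable def savS {n : ℕ} (S : Matrix (Fin n) (Fin n) ℝ)
    (gradV : (Fin n → ℝ) → (Fin n → ℝ)) (V : (Fin n → ℝ) → ℝ)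
    (C : ℝ) (z : Fin n → ℝ) : Matrix (Fin n ⊕ Unit) (Fin n ⊕ Unit) ℝ :=
  (savB gradV V C z)ᵀ * S * savB gradV V C z

/-- the extended SAV energy `H̃(z, r) = ½ zᵀ M z + r² − C` -/
noncomputable def savH {n : ℕ} (M : Matrix (Fin n) (Fin n) ℝ) (C : ℝ)
    (z : Fin n → ℝ) (r : ℝ) : ℝ :=
  (1/2 : ℝ) * (z ⬝ᵥ M.mulVec z) + r ^ 2 - C

lemma quad_hasDerivAt {n : ℕ} (M : Matrix (Fin n) (Fin n) ℝ) (z : ℝ → Fin n → ℝ)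
    (u : Fin n → ℝ) (t : ℝ) (hz : ∀ i, HasDerivAt (fun t => z t i) (u i) t) :
    HasDerivAt (fun t => z t ⬝ᵥ M.mulVec (z t))
      (u ⬝ᵥ M.mulVec (z t) + z t ⬝ᵥ M.mulVec u) t := by
  have h : ∀ i ∈ Finset.univ, HasDerivAt (fun t => z t i * (M.mulVec (z t)) i)
      (u i * (M.mulVec (z t)) i + z t i * (M.mulVec u) i) t := by
    intro i _
    have h1 : HasDerivAt (fun t => (M.mulVec (z t)) i) ((M.mulVec u) i) t := by
      simpa [Matrix.mulVec, dotProduct] using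
        HasDerivAt.fun_sum (fun j _ => ((hz j).const_mul (M i j)))
    exact (hz i).mul h1
  simpa [dotProduct, Finset.sum_add_distrib] using HasDerivAt.fun_sum h

lemma skew_quad_zero {n : ℕ} {S : Matrix (Fin n) (Fin n) ℝ} (h : Sᵀ = -S)
    (x : Fin n → ℝ) : x ⬝ᵥ S.mulVec x = 0 := by
  have h1 : x ⬝ᵥ Sᵀ.mulVec x = x ⬝ᵥ S.mulVec x := by
    rw [Matrix.mulVec_transpose, dotProduct_comm, Matrix.dotProduct_mulVec]
  rw [h] at h1
  simp [Matrix.neg_mulVec] at h1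
  linarith

lemma sym_quad {n : ℕ} (S : Matrix (Fin n) (Fin n) ℝ) (x : Fin n → ℝ) :
    x ⬝ᵥ (symPart S).mulVec x = x ⬝ᵥ S.mulVec x := by
  have h1 : x ⬝ᵥ Sᵀ.mulVec x = x ⬝ᵥ S.mulVec x := by
    rw [Matrix.mulVec_transpose, dotProduct_comm, Matrix.dotProduct_mulVec]
  simp [symPart, Matrix.add_mulVec, Matrix.smul_mulVec, dotProduct_add,
    dotProduct_smul, h1]
  ring

/-- along solutions of the extended SAV system
`d/dt (z,r) = S̃(z) ∇H̃(z,r)`, the extended energy `H̃` is constant if `S` is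
skew-symmetric, and nonincreasing if the symmetric part of `S` is negative
semidefinite. -/
theorem stmt4 {n : ℕ} (S M : Matrix (Fin n) (Fin n) ℝ) (hM : Mᵀ = M)
    (V : (Fin n → ℝ) → ℝ) (gradV : (Fin n → ℝ) → (Fin n → ℝ))
    (hV : ∀ z, HasFDerivAt V (dotCLM (gradV z)) z)
    (C : ℝ) (hC : ∀ z, V z + C > 0)
    (z : ℝ → (Fin n → ℝ)) (r : ℝ → ℝ)
    (hODE : ∀ t, HasDerivAt (fun t => (Sum.elim (z t) (fun _ => r t) : (Fin n ⊕ Unit) → ℝ))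
      ((savS S gradV V C (z t)).mulVec
        (Sum.elim (M.mulVec (z t)) (fun _ => 2 * r t))) t) :
    (Sᵀ = -S → ∀ s t : ℝ, savH M C (z s) (r s) = savH M C (z t) (r t))
    ∧ (NegSemidef (symPart S) →
        ∀ s t : ℝ, s ≤ t → savH M C (z t) (r t) ≤ savH M C (z s) (r s)) := by
  set g : ℝ → (Fin n ⊕ Unit) → ℝ :=
    fun t => Sum.elim (M.mulVec (z t)) (fun _ => 2 * r t) with hg
  set u : ℝ → (Fin n ⊕ Unit) → ℝ := fun t => (savS S gradV V C (z t)).mulVec (g t) with hu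
  set x : ℝ → Fin n → ℝ := fun t => (savB gradV V C (z t)).mulVec (g t) with hx
  -- componentwise derivatives
  have hzc : ∀ t i, HasDerivAt (fun t => z t i) (u t (Sum.inl i)) t := fun t i =>
    (hasDerivAt_pi.mp (hODE t)) (Sum.inl i)
  have hrc : ∀ t, HasDerivAt r (u t (Sum.inr ())) t := fun t =>
    (hasDerivAt_pi.mp (hODE t)) (Sum.inr ())
  -- derivative of energy
  have key : ∀ t, HasDerivAt (fun t => savH M C (z t) (r t)) (x t ⬝ᵥ S.mulVec (x t)) t := by
    intro t
    have hq := quad_hasDerivAt M z (fun i => u t (Sum.inl i)) t (hzc t)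
    have hr2 : HasDerivAt (fun t => r t ^ 2) (2 * r t ^ 1 * u t (Sum.inr ())) t :=
      (hrc t).pow 2
    have hE : HasDerivAt (fun t => savH M C (z t) (r t))
        ((1/2 : ℝ) * ((fun i => u t (Sum.inl i)) ⬝ᵥ M.mulVec (z t)
          + z t ⬝ᵥ M.mulVec (fun i => u t (Sum.inl i)))
          + 2 * r t ^ 1 * u t (Sum.inr ())) t := by
      simpa [savH] using ((hq.const_mul (1/2 : ℝ)).add hr2).sub_const C
    convert hE using 1
    -- show x⬝ᵥSx equals that derivative
    have hsym : (fun i => u t (Sum.inl i)) ⬝ᵥ M.mulVec (z t)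
        = z t ⬝ᵥ M.mulVec (fun i => u t (Sum.inl i)) := by
      rw [dotProduct_comm, Matrix.dotProduct_mulVec, ← Matrix.mulVec_transpose, hM]
    have hxS : x t ⬝ᵥ S.mulVec (x t) = g t ⬝ᵥ u t := by
      have hsplit : u t = (savB gradV V C (z t))ᵀ.mulVec
          (S.mulVec ((savB gradV V C (z t)).mulVec (g t))) := by
        simp only [hu, savS, ← Matrix.mulVec_mulVec, Matrix.mul_assoc]
      rw [hsplit]
      conv_rhs => rw [Matrix.dotProduct_mulVec, Matrix.vecMul_transpose]
    have hgu : g t ⬝ᵥ u t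
        = z t ⬝ᵥ M.mulVec (fun i => u t (Sum.inl i)) + 2 * r t * u t (Sum.inr ()) := by
      have h1 : g t ⬝ᵥ u t = (∑ i, M.mulVec (z t) i * u t (Sum.inl i))
          + 2 * r t * u t (Sum.inr ()) := by
        simp [dotProduct, Fintype.sum_sum_type, hg]
      rw [h1]
      congr 1
      conv_rhs => rw [Matrix.dotProduct_mulVec, ← hM, Matrix.vecMul_transpose]
      simp [dotProduct]
    rw [hxS, hgu, hsym]
    ring
  have hdiff : Differentiable ℝ (fun t => savH M C (z t) (r t)) :=
    fun t => (key t).differentiableAt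
  constructor
  · intro hS s t
    exact is_const_of_deriv_eq_zero hdiff
      (fun t => by rw [(key t).deriv]; exact skew_quad_zero hS (x t)) s t
  · intro hN s t hst
    exact antitone_of_deriv_nonpos hdiff
      (fun t => by rw [(key t).deriv, ← sym_quad S (x t)]; exact hN.2 (x t)) hst
end

section
/- Let M ∈ ℝ^{n×n} be a symmetric positive definite matrix, and let D : [t_a, t_b] → ℝ^{n×n} be continuous with sym(M D(t)) positive semidefinite for all t ∈ [t_a, t_b]. Let Γ(t) solve the matrix ODE Γ'(t) = −D(t) Γ(t) with Γ(t_a) = I. Then Γ(t) is invertible for all t ∈ [t_a, t_b], and both Γ(t)ᵀ M Γ(t) − M ⪯ 0 and M − Γ(t)⁻ᵀ M Γ(t)⁻¹ ⪯ 0 hold in the Loewner order. -/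
open Matrix

attribute [local instance] Matrix.normedAddCommGroup Matrix.normedSpace

lemma aux_hasDerivAt_mulVec_left {n : ℕ} {Γ : ℝ → Matrix (Fin n) (Fin n) ℝ}
    {A : Matrix (Fin n) (Fin n) ℝ} {t : ℝ} (h : HasDerivAt Γ A t) (x : Fin n → ℝ) :
    HasDerivAt (fun s => Γ s *ᵥ x) (A *ᵥ x) t := by
  rw [hasDerivAt_pi]
  intro i
  simpa [Matrix.mulVec, dotProduct] using
    HasDerivAt.fun_sum (fun j (_ : j ∈ Finset.univ) =>
      ((hasDerivAt_pi.1 (hasDerivAt_pi.1 h i) j).mul_const (x j)))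

lemma aux_hasDerivAt_const_mulVec {n : ℕ} (M : Matrix (Fin n) (Fin n) ℝ)
    {u : ℝ → Fin n → ℝ} {u' : Fin n → ℝ} {t : ℝ} (hu : HasDerivAt u u' t) :
    HasDerivAt (fun s => M *ᵥ u s) (M *ᵥ u') t := by
  rw [hasDerivAt_pi]
  intro i
  simpa [Matrix.mulVec, dotProduct] using
    HasDerivAt.fun_sum (fun j (_ : j ∈ Finset.univ) =>
      ((hasDerivAt_pi.1 hu j).const_mul (M i j)))

lemma aux_hasDerivAt_dot {n : ℕ} {u w : ℝ → Fin n → ℝ} {u' w' : Fin n → ℝ} {t : ℝ}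
    (hu : HasDerivAt u u' t) (hw : HasDerivAt w w' t) :
    HasDerivAt (fun s => u s ⬝ᵥ w s) (u' ⬝ᵥ w t + u t ⬝ᵥ w') t := by
  have := HasDerivAt.fun_sum (fun i (_ : i ∈ Finset.univ) =>
    ((hasDerivAt_pi.1 hu i).mul (hasDerivAt_pi.1 hw i)))
  simpa [dotProduct, Finset.sum_add_distrib] using this

lemma aux_quad_bound {n : ℕ} (S : Matrix (Fin n) (Fin n) ℝ) (v : Fin n → ℝ) :
    v ⬝ᵥ S *ᵥ v ≤ ((n : ℝ)^2 * ‖S‖) * ‖v‖^2 := by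
  have hij : ∀ i j, v i * (S i j * v j) ≤ ‖S‖ * (‖v‖ * ‖v‖) := by
    intro i j
    calc v i * (S i j * v j) ≤ |v i * (S i j * v j)| := le_abs_self _
      _ = |S i j| * (|v i| * |v j|) := by rw [abs_mul, abs_mul]; ring
      _ ≤ ‖S‖ * (‖v‖ * ‖v‖) := by
          apply mul_le_mul (Matrix.norm_entry_le_entrywise_sup_norm S) ?_ (by positivity)
            (norm_nonneg _)
          exact mul_le_mul (norm_le_pi_norm v i) (norm_le_pi_norm v j) (abs_nonneg _)
            (norm_nonneg _)
  calc v ⬝ᵥ S *ᵥ v = ∑ i, ∑ j, v i * (S i j * v j) := by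
        simp [dotProduct, Matrix.mulVec, Finset.mul_sum]
    _ ≤ ∑ _i : Fin n, ∑ _j : Fin n, ‖S‖ * (‖v‖ * ‖v‖) := by
        exact Finset.sum_le_sum fun i _ => Finset.sum_le_sum fun j _ => hij i j
    _ = ((n : ℝ)^2 * ‖S‖) * ‖v‖^2 := by
        simp [Finset.sum_const]; ring

lemma aux_coercive {n : ℕ} {M : Matrix (Fin n) (Fin n) ℝ} (hM : M.PosDef) :
    ∃ lam > 0, ∀ v : Fin n → ℝ, lam * ‖v‖^2 ≤ v ⬝ᵥ M *ᵥ v := by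
  have hq : ∀ v : Fin n → ℝ, v ≠ 0 → 0 < v ⬝ᵥ M *ᵥ v := by
    intro v hv; simpa using hM.dotProduct_mulVec_pos hv
  rcases Nat.eq_zero_or_pos n with hn | hn
  · refine ⟨1, one_pos, fun v => ?_⟩
    subst hn
    have : v = 0 := Subsingleton.elim v 0
    rw [this, norm_zero]
    simp [dotProduct]
  · haveI : Nonempty (Fin n) := ⟨⟨0, hn⟩⟩
    have hcont : Continuous fun v : Fin n → ℝ => v ⬝ᵥ M *ᵥ v := by
      unfold dotProduct Matrix.mulVec
      exact continuous_finset_sum _ fun i _ => (continuous_apply i).mul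
        (continuous_finset_sum _ fun j _ => continuous_const.mul (continuous_apply j))
    have hsne : (Metric.sphere (0 : Fin n → ℝ) 1).Nonempty :=
      NormedSpace.sphere_nonempty.2 zero_le_one
    obtain ⟨v0, hv0, hmin⟩ := (isCompact_sphere (0 : Fin n → ℝ) 1).exists_isMinOn hsne
      hcont.continuousOn
    have hv0n : ‖v0‖ = 1 := by simpa using hv0
    have hv0ne : v0 ≠ 0 := by intro h; rw [h] at hv0n; simp at hv0n
    refine ⟨v0 ⬝ᵥ M *ᵥ v0, hq v0 hv0ne, fun v => ?_⟩
    rcases eq_or_ne v 0 with rfl | hv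
    · simp
    · have hnv : (0:ℝ) < ‖v‖ := norm_pos_iff.2 hv
      set w : Fin n → ℝ := ‖v‖⁻¹ • v with hw
      have hwn : w ∈ Metric.sphere (0 : Fin n → ℝ) 1 := by
        simp [hw, norm_smul, abs_of_pos (inv_pos.2 hnv), inv_mul_cancel₀ hnv.ne']
      have hle := hmin hwn
      have hwq : w ⬝ᵥ M *ᵥ w = ‖v‖⁻¹ * ‖v‖⁻¹ * (v ⬝ᵥ M *ᵥ v) := by
        simp [hw, Matrix.mulVec_smul, dotProduct_smul, smul_dotProduct,
          smul_eq_mul]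
        ring
      have : (v0 ⬝ᵥ M *ᵥ v0) ≤ ‖v‖⁻¹ * ‖v‖⁻¹ * (v ⬝ᵥ M *ᵥ v) := by
        simpa [hwq] using hle
      have h2 : (v0 ⬝ᵥ M *ᵥ v0) * ‖v‖^2 ≤ ‖v‖⁻¹ * ‖v‖⁻¹ * (v ⬝ᵥ M *ᵥ v) * ‖v‖^2 :=
        mul_le_mul_of_nonneg_right this (by positivity)
      calc (v0 ⬝ᵥ M *ᵥ v0) * ‖v‖^2 ≤ ‖v‖⁻¹ * ‖v‖⁻¹ * (v ⬝ᵥ M *ᵥ v) * ‖v‖^2 := h2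
        _ = v ⬝ᵥ M *ᵥ v := by
            rw [pow_two]
            field_simp

lemma aux_deriv_value {n : ℕ} (M Dm : Matrix (Fin n) (Fin n) ℝ) (hMs : Mᵀ = M)
    (u : Fin n → ℝ) :
    ((-Dm) *ᵥ u) ⬝ᵥ (M *ᵥ u) + u ⬝ᵥ (M *ᵥ ((-Dm) *ᵥ u)) =
      -(2 * (u ⬝ᵥ (symPart (M * Dm)) *ᵥ u)) := by
  have h1 : (Dm *ᵥ u) ⬝ᵥ (M *ᵥ u) = u ⬝ᵥ ((M * Dm)ᵀ *ᵥ u) := by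
    rw [Matrix.transpose_mul, ← Matrix.mulVec_mulVec, Matrix.dotProduct_mulVec u Dmᵀ,
      Matrix.vecMul_transpose, hMs]
  have h2 : u ⬝ᵥ (M *ᵥ (Dm *ᵥ u)) = u ⬝ᵥ ((M * Dm) *ᵥ u) := by
    rw [Matrix.mulVec_mulVec]
  have hS : u ⬝ᵥ (symPart (M * Dm)) *ᵥ u
      = (1/2 : ℝ) * (u ⬝ᵥ ((M * Dm) *ᵥ u) + u ⬝ᵥ ((M * Dm)ᵀ *ᵥ u)) := by
    simp [symPart, Matrix.smul_mulVec, Matrix.add_mulVec, dotProduct_smul,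
      dotProduct_add, smul_eq_mul, mul_add]
  have hneg1 : ((-Dm) *ᵥ u) ⬝ᵥ (M *ᵥ u) = -((Dm *ᵥ u) ⬝ᵥ (M *ᵥ u)) := by
    rw [Matrix.neg_mulVec, neg_dotProduct]
  have hneg2 : u ⬝ᵥ (M *ᵥ ((-Dm) *ᵥ u)) = -(u ⬝ᵥ (M *ᵥ (Dm *ᵥ u))) := by
    rw [Matrix.neg_mulVec, Matrix.mulVec_neg, dotProduct_neg]
  rw [hneg1, hneg2, h1, h2, hS]
  ring

lemma aux_congr {m : Type*} [Fintype m] {A : Matrix m m ℝ} (hA : NegSemidef A)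
    (B : Matrix m m ℝ) : NegSemidef (Bᵀ * A * B) := by
  constructor
  · rw [Matrix.transpose_mul, Matrix.transpose_mul, Matrix.transpose_transpose, hA.1,
      Matrix.mul_assoc]
  · intro x
    have h : x ⬝ᵥ (Bᵀ * A * B) *ᵥ x = (B *ᵥ x) ⬝ᵥ A *ᵥ (B *ᵥ x) := by
      rw [Matrix.mul_assoc, ← Matrix.mulVec_mulVec, Matrix.dotProduct_mulVec x Bᵀ,
        Matrix.vecMul_transpose, ← Matrix.mulVec_mulVec]
    rw [h]
    exact hA.2 _

/-- damping lemma: if `M ≻ 0`, `sym(MD(t)) ⪰ 0` on `[ta, tb]`, and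
`Γ' = −DΓ`, `Γ(ta) = I`, then `Γ(t)` is invertible and both
`Γ(t)ᵀMΓ(t) − M ⪯ 0` and `M − Γ(t)⁻ᵀMΓ(t)⁻¹ ⪯ 0`. -/
theorem stmt5 {n : ℕ} (M : Matrix (Fin n) (Fin n) ℝ) (hM : M.PosDef)
    (ta tb : ℝ) (hab : ta ≤ tb)
    (D : ℝ → Matrix (Fin n) (Fin n) ℝ)
    (hD : ContinuousOn D (Set.Icc ta tb))
    (hMD : ∀ t ∈ Set.Icc ta tb, (symPart (M * D t)).PosSemidef)
    (Γ : ℝ → Matrix (Fin n) (Fin n) ℝ)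
    (hΓ : ∀ t ∈ Set.Icc ta tb, HasDerivAt Γ (-(D t) * Γ t) t)
    (hΓ0 : Γ ta = 1) :
    ∀ t ∈ Set.Icc ta tb,
      IsUnit (Γ t)
      ∧ NegSemidef ((Γ t)ᵀ * M * Γ t - M)
      ∧ NegSemidef (M - ((Γ t)⁻¹)ᵀ * M * (Γ t)⁻¹) := by
  have hMs : Mᵀ = M := by
    rw [← Matrix.conjTranspose_eq_transpose_of_trivial]; exact hM.1
  -- bound on the norm of symPart (M * D s)
  obtain ⟨K, hK⟩ : ∃ K, ∀ s ∈ Set.Icc ta tb, ‖symPart (M * D s)‖ ≤ K := by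
    have hc : ContinuousOn (fun s => symPart (M * D s)) (Set.Icc ta tb) := by
      have hcout : Continuous fun A : Matrix (Fin n) (Fin n) ℝ =>
          (1/2 : ℝ) • (M * A + (M * A)ᵀ) :=
        (((continuous_const.matrix_mul continuous_id).fun_add
          (continuous_const.matrix_mul continuous_id).matrix_transpose).fun_const_smul _)
      simpa [symPart, Function.comp_def] using hcout.comp_continuousOn hD
    exact isCompact_Icc.exists_bound_of_continuousOn hc
  set K0 : ℝ := max K 0 with hK0def
  have hK0 : 0 ≤ K0 := le_max_right _ _
  obtain ⟨lam, hlam, hco⟩ := aux_coercive hM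
  set C : ℝ := 2 * (n : ℝ)^2 * K0 / lam with hCdef
  have hC0 : 0 ≤ C := by positivity
  have hclam : C * lam = 2 * (n : ℝ)^2 * K0 := div_mul_cancel₀ _ hlam.ne'
  -- key estimates for each vector x
  have key : ∀ x : Fin n → ℝ, ∀ t ∈ Set.Icc ta tb,
      ((Γ t *ᵥ x) ⬝ᵥ M *ᵥ (Γ t *ᵥ x) ≤ x ⬝ᵥ M *ᵥ x) ∧
      (x ≠ 0 → 0 < (Γ t *ᵥ x) ⬝ᵥ M *ᵥ (Γ t *ᵥ x)) := by
    intro x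
    set u : ℝ → Fin n → ℝ := fun s => Γ s *ᵥ x with hudef
    set g : ℝ → ℝ := fun s => u s ⬝ᵥ M *ᵥ u s with hgdef
    have hgd : ∀ s ∈ Set.Icc ta tb,
        HasDerivAt g (-(2 * (u s ⬝ᵥ (symPart (M * D s)) *ᵥ u s))) s := by
      intro s hs
      have hus : HasDerivAt u ((-(D s) * Γ s) *ᵥ x) s :=
        aux_hasDerivAt_mulVec_left (hΓ s hs) x
      have h1 : ((-(D s) * Γ s) *ᵥ x) = (-(D s)) *ᵥ u s := by
        rw [← Matrix.mulVec_mulVec]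
      rw [h1] at hus
      have hd := aux_hasDerivAt_dot hus (aux_hasDerivAt_const_mulVec M hus)
      rwa [aux_deriv_value M (D s) hMs (u s)] at hd
    have hgcont : ContinuousOn g (Set.Icc ta tb) :=
      fun s hs => (hgd s hs).continuousAt.continuousWithinAt
    have hta : g ta = x ⬝ᵥ M *ᵥ x := by
      show (Γ ta *ᵥ x) ⬝ᵥ M *ᵥ (Γ ta *ᵥ x) = x ⬝ᵥ M *ᵥ x
      rw [hΓ0, Matrix.one_mulVec]
    have hanti : AntitoneOn g (Set.Icc ta tb) := by
      apply antitoneOn_of_deriv_nonpos (convex_Icc ta tb) hgcont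
      · intro s hs
        rw [interior_Icc] at hs
        exact (hgd s (Set.Ioo_subset_Icc_self hs)).differentiableAt.differentiableWithinAt
      · intro s hs
        rw [interior_Icc] at hs
        rw [(hgd s (Set.Ioo_subset_Icc_self hs)).deriv]
        have h0 : 0 ≤ u s ⬝ᵥ (symPart (M * D s)) *ᵥ u s := by
          simpa using (hMD s (Set.Ioo_subset_Icc_self hs)).dotProduct_mulVec_nonneg (u s)
        linarith
    intro t ht
    have htam : ta ∈ Set.Icc ta tb := ⟨le_refl ta, hab⟩
    constructor
    · have := hanti htam ht ht.1
      rw [hta] at this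
      exact this
    · intro hx
      -- Gronwall-type lower bound
      have hhd : ∀ s ∈ Set.Icc ta tb, HasDerivAt (fun s' => g s' * Real.exp (C * s'))
          (-(2 * (u s ⬝ᵥ (symPart (M * D s)) *ᵥ u s)) * Real.exp (C * s)
            + g s * (Real.exp (C * s) * (C * 1))) s :=
        fun s hs => (hgd s hs).mul (((hasDerivAt_id s).const_mul C).exp)
      have hmono : MonotoneOn (fun s' => g s' * Real.exp (C * s')) (Set.Icc ta tb) := by
        apply monotoneOn_of_deriv_nonneg (convex_Icc ta tb)
        · exact fun s hs => (hhd s hs).continuousAt.continuousWithinAt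
        · intro s hs
          rw [interior_Icc] at hs
          exact (hhd s (Set.Ioo_subset_Icc_self hs)).differentiableAt.differentiableWithinAt
        · intro s hs
          rw [interior_Icc] at hs
          have hs' := Set.Ioo_subset_Icc_self hs
          rw [(hhd s hs').deriv]
          set Q : ℝ := u s ⬝ᵥ (symPart (M * D s)) *ᵥ u s with hQdef
          have hub : Q ≤ ((n:ℝ)^2 * K0) * ‖u s‖^2 := by
            refine (aux_quad_bound _ _).trans ?_
            have hSK : ‖symPart (M * D s)‖ ≤ K0 := le_trans (hK s hs') (le_max_left _ _)
            exact mul_le_mul_of_nonneg_right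
              (mul_le_mul_of_nonneg_left hSK (by positivity : (0:ℝ) ≤ (n:ℝ)^2))
              (sq_nonneg ‖u s‖)
          have hlb : lam * ‖u s‖^2 ≤ g s := hco (u s)
          have hexp : (0:ℝ) < Real.exp (C * s) := Real.exp_pos _
          have h3 : C * (lam * ‖u s‖^2) = 2 * (n:ℝ)^2 * K0 * ‖u s‖^2 := by
            rw [← mul_assoc, hclam]
          have hkey : 2 * Q ≤ g s * C := by
            have h4 := mul_le_mul_of_nonneg_left hlb hC0
            linarith
          have h5 : 0 ≤ (g s * C - 2 * Q) * Real.exp (C * s) :=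
            mul_nonneg (by linarith) hexp.le
          linarith [h5]
      have h1 : g ta * Real.exp (C * ta) ≤ g t * Real.exp (C * t) :=
        hmono htam ht ht.1
      have hpos : 0 < g ta := by
        rw [hta]; simpa using hM.dotProduct_mulVec_pos hx
      have he1 : (0:ℝ) < Real.exp (C * ta) := Real.exp_pos _
      have he2 : (0:ℝ) < Real.exp (C * t) := Real.exp_pos _
      by_contra hle
      push_neg at hle
      have h6 : 0 ≤ (-(g t)) * Real.exp (C * t) := mul_nonneg (by linarith) he2.le
      nlinarith [mul_pos hpos he1]
  -- conclude
  intro t ht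
  have hdet : (Γ t).det ≠ 0 := by
    intro h0
    obtain ⟨v, hv, hveq⟩ := Matrix.exists_mulVec_eq_zero_iff.2 h0
    have hp := (key v t ht).2 hv
    rw [hveq] at hp
    simp at hp
  have hunit : IsUnit (Γ t) := (Matrix.isUnit_iff_isUnit_det _).2 (isUnit_iff_ne_zero.2 hdet)
  have hpart2 : NegSemidef ((Γ t)ᵀ * M * Γ t - M) := by
    constructor
    · rw [Matrix.transpose_sub, Matrix.transpose_mul, Matrix.transpose_mul,
        Matrix.transpose_transpose, hMs, ← Matrix.mul_assoc]
    · intro x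
      have hx : x ⬝ᵥ ((Γ t)ᵀ * M * Γ t - M) *ᵥ x
          = (Γ t *ᵥ x) ⬝ᵥ M *ᵥ (Γ t *ᵥ x) - x ⬝ᵥ M *ᵥ x := by
        rw [Matrix.sub_mulVec, dotProduct_sub, Matrix.mul_assoc,
          ← Matrix.mulVec_mulVec, Matrix.dotProduct_mulVec x (Γ t)ᵀ,
          Matrix.vecMul_transpose, ← Matrix.mulVec_mulVec]
      rw [hx]
      have := (key x t ht).1
      linarith
  have hinv : Γ t * (Γ t)⁻¹ = 1 := Matrix.mul_nonsing_inv _ (isUnit_iff_ne_zero.2 hdet)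
  have heq : M - ((Γ t)⁻¹)ᵀ * M * (Γ t)⁻¹
      = ((Γ t)⁻¹)ᵀ * ((Γ t)ᵀ * M * Γ t - M) * (Γ t)⁻¹ := by
    have h1 : ((Γ t)⁻¹)ᵀ * ((Γ t)ᵀ * M * Γ t) * (Γ t)⁻¹ = M := by
      calc ((Γ t)⁻¹)ᵀ * ((Γ t)ᵀ * M * Γ t) * (Γ t)⁻¹
          = (((Γ t)⁻¹)ᵀ * (Γ t)ᵀ) * (M * (Γ t * (Γ t)⁻¹)) := by
            simp only [Matrix.mul_assoc]
        _ = M := by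
            rw [← Matrix.transpose_mul, hinv, Matrix.transpose_one, Matrix.one_mul,
              Matrix.mul_one]
    rw [Matrix.mul_sub, Matrix.sub_mul, h1]
  exact ⟨hunit, hpart2, by rw [heq]; exact aux_congr hpart2 _⟩
end

section
/- Let M ∈ ℝ^{n×n} be symmetric, S ∈ ℝ^{n×n}, h > 0, and set E = exp(h S M) and B(h) = Eᵀ M E − M. If S is skew-symmetric, then B(h) = 0. If the symmetric part of S is negative semidefinite, then B(h) is negative semidefinite. -/
open Matrix

section aux
variable {n : ℕ}

def entryLM (i j : Fin n) : Matrix (Fin n) (Fin n) ℝ →ₗ[ℝ] ℝ where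
  toFun N := N i j
  map_add' _ _ := rfl
  map_smul' _ _ := rfl

theorem aux1 (A M : Matrix (Fin n) (Fin n) ℝ) (x : Fin n → ℝ) (t : ℝ) :
    HasDerivAt (fun t : ℝ => (NormedSpace.exp (t • A)) *ᵥ x ⬝ᵥ M *ᵥ ((NormedSpace.exp (t • A)) *ᵥ x))
      ((A * NormedSpace.exp (t • A)) *ᵥ x ⬝ᵥ M *ᵥ (NormedSpace.exp (t • A) *ᵥ x)
        + (NormedSpace.exp (t • A)) *ᵥ x ⬝ᵥ M *ᵥ ((A * NormedSpace.exp (t • A)) *ᵥ x)) t := by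
  letI : SeminormedRing (Matrix (Fin n) (Fin n) ℝ) := Matrix.linftyOpSemiNormedRing
  letI : NormedRing (Matrix (Fin n) (Fin n) ℝ) := Matrix.linftyOpNormedRing
  letI : NormedAlgebra ℝ (Matrix (Fin n) (Fin n) ℝ) := Matrix.linftyOpNormedAlgebra
  have hE : HasDerivAt (fun t : ℝ => NormedSpace.exp (t • A)) (A * NormedSpace.exp (t • A)) t :=
    hasDerivAt_exp_smul_const' A t
  have hentry : ∀ i j : Fin n, HasDerivAt (fun t : ℝ => NormedSpace.exp (t • A) i j)
      ((A * NormedSpace.exp (t • A)) i j) t := fun i j =>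
    ((entryLM i j).toContinuousLinearMap.hasFDerivAt.comp_hasDerivAt t hE)
  have hu : ∀ i : Fin n, HasDerivAt (fun t : ℝ => ((NormedSpace.exp (t • A)) *ᵥ x) i)
      (((A * NormedSpace.exp (t • A)) *ᵥ x) i) t := by
    intro i
    simp only [mulVec, dotProduct]
    exact HasDerivAt.fun_sum fun j _ => (hentry i j).mul_const (x j)
  have h2 : HasDerivAt
      (fun t : ℝ => ∑ i, ((NormedSpace.exp (t • A)) *ᵥ x) i *
        (∑ j, M i j * ((NormedSpace.exp (t • A)) *ᵥ x) j))
      (∑ i, (((A * NormedSpace.exp (t • A)) *ᵥ x) i *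
          (∑ j, M i j * ((NormedSpace.exp (t • A)) *ᵥ x) j)
        + ((NormedSpace.exp (t • A)) *ᵥ x) i *
          (∑ j, M i j * (((A * NormedSpace.exp (t • A)) *ᵥ x) j)))) t :=
    HasDerivAt.fun_sum fun i _ =>
      (hu i).mul (HasDerivAt.fun_sum fun j _ => (hu j).const_mul (M i j))
  convert h2 using 1
  simp [dotProduct, mulVec, Finset.sum_add_distrib]
  simp [dotProduct, mulVec, Finset.sum_add_distrib]
end aux

section aux2
variable {n : ℕ}

theorem aux2 (M S : Matrix (Fin n) (Fin n) ℝ) (hM : Mᵀ = M) (x : Fin n → ℝ) (t : ℝ) :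
    HasDerivAt (fun t : ℝ => (NormedSpace.exp (t • (S * M))) *ᵥ x ⬝ᵥ
        M *ᵥ ((NormedSpace.exp (t • (S * M))) *ᵥ x))
      (2 * ((M *ᵥ (NormedSpace.exp (t • (S * M)) *ᵥ x)) ⬝ᵥ
        (symPart S) *ᵥ (M *ᵥ (NormedSpace.exp (t • (S * M)) *ᵥ x)))) t := by
  have h := aux1 (S * M) M x t
  convert h using 1
  set u := NormedSpace.exp (t • (S * M)) *ᵥ x with hu
  set v := M *ᵥ u with hv
  have h1 : (S * M * NormedSpace.exp (t • (S * M))) *ᵥ x = S *ᵥ v := by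
    rw [hv, hu, ← Matrix.mulVec_mulVec, ← Matrix.mulVec_mulVec]
  rw [h1]
  have h2 : u ⬝ᵥ M *ᵥ (S *ᵥ v) = v ⬝ᵥ (S *ᵥ v) := by
    rw [Matrix.dotProduct_mulVec, ← hM, Matrix.vecMul_transpose, ← hv]
  have h3 : (S *ᵥ v) ⬝ᵥ v = v ⬝ᵥ (S *ᵥ v) := dotProduct_comm _ _
  have h4 : v ⬝ᵥ Sᵀ *ᵥ v = v ⬝ᵥ S *ᵥ v := by
    rw [Matrix.dotProduct_mulVec, Matrix.vecMul_transpose, dotProduct_comm]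
  have hmv : M *ᵥ (S *ᵥ v) = M *ᵥ (S *ᵥ v) := rfl
  -- reduce goal
  rw [h3, h2]  -- may fail if shapes differ
  simp only [symPart, Matrix.smul_mulVec, dotProduct_smul, Matrix.add_mulVec,
    dotProduct_add, h4, smul_eq_mul]
  ring
end aux2

theorem polar {n : ℕ} (B : Matrix (Fin n) (Fin n) ℝ) (hB : Bᵀ = B)
    (h0 : ∀ x : Fin n → ℝ, x ⬝ᵥ B *ᵥ x = 0) : B = 0 := by
  ext i j
  have hsym : B j i = B i j := congrFun (congrFun hB i) j
  have h1 := h0 (Pi.single i 1 + Pi.single j 1)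
  have h2 := h0 (Pi.single i 1)
  have h3 := h0 (Pi.single j 1)
  simp only [Matrix.mulVec_add, dotProduct_add, add_dotProduct,
    Matrix.mulVec_single_one, single_dotProduct, Pi.add_apply, Matrix.col_apply, mul_one,
    one_mul] at h1 h2 h3
  simp only [Matrix.zero_apply]
  linarith


/-- with `E = exp(hSM)` and `B(h) = EᵀME − M` (`M` symmetric, `h > 0`):
if `S` is skew-symmetric then `B(h) = 0`; if the symmetric part of `S` is negative
semidefinite then `B(h)` is negative semidefinite. -/
theorem stmt7 {n : ℕ} (M S : Matrix (Fin n) (Fin n) ℝ) (hM : Mᵀ = M)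
    (h : ℝ) (hh : 0 < h) :
    (Sᵀ = -S →
      (NormedSpace.exp (h • (S * M)))ᵀ * M * NormedSpace.exp (h • (S * M)) - M = 0)
    ∧ (NegSemidef (symPart S) →
      NegSemidef
        ((NormedSpace.exp (h • (S * M)))ᵀ * M * NormedSpace.exp (h • (S * M)) - M)) := by
  set E := NormedSpace.exp (h • (S * M)) with hE
  set f : (Fin n → ℝ) → ℝ → ℝ := fun x t =>
    (NormedSpace.exp (t • (S * M))) *ᵥ x ⬝ᵥ M *ᵥ ((NormedSpace.exp (t • (S * M))) *ᵥ x)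
    with hf
  have hdiff : ∀ x, Differentiable ℝ (f x) := fun x t => (aux2 M S hM x t).differentiableAt
  have hderiv : ∀ x t, deriv (f x) t =
      2 * ((M *ᵥ (NormedSpace.exp (t • (S * M)) *ᵥ x)) ⬝ᵥ
        (symPart S) *ᵥ (M *ᵥ (NormedSpace.exp (t • (S * M)) *ᵥ x))) :=
    fun x t => (aux2 M S hM x t).deriv
  have hf0 : ∀ x, f x 0 = x ⬝ᵥ M *ᵥ x := by
    intro x
    simp [hf, NormedSpace.exp_zero]
  have hfh : ∀ x : Fin n → ℝ, x ⬝ᵥ (Eᵀ * M * E - M) *ᵥ x = f x h - x ⬝ᵥ M *ᵥ x := by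
    intro x
    rw [Matrix.sub_mulVec, dotProduct_sub]
    congr 1
    rw [← Matrix.mulVec_mulVec, ← Matrix.mulVec_mulVec, Matrix.dotProduct_mulVec,
      Matrix.vecMul_transpose]
  have hBsym : (Eᵀ * M * E - M)ᵀ = Eᵀ * M * E - M := by
    rw [Matrix.transpose_sub, Matrix.transpose_mul, Matrix.transpose_mul, hM,
      Matrix.transpose_transpose, mul_assoc]
  constructor
  · intro hskew
    have hsp : symPart S = 0 := by
      rw [symPart, hskew]; simp
    have hconst : ∀ x, f x h = f x 0 := fun x =>
      is_const_of_deriv_eq_zero (hdiff x) (fun t => by rw [hderiv, hsp]; simp) h 0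
    refine polar _ hBsym fun x => ?_
    rw [hfh, hconst, hf0, sub_self]
  · rintro ⟨-, hneg⟩
    refine ⟨hBsym, fun x => ?_⟩
    have hanti : Antitone (f x) := antitone_of_deriv_nonpos (hdiff x) fun t => by
      rw [hderiv]
      have := hneg (M *ᵥ (NormedSpace.exp (t • (S * M)) *ᵥ x))
      linarith
    rw [hfh]
    have := hanti hh.le
    rw [hf0] at this
    linarith
end

section
/- Consider one step of the EISAV scheme: given M symmetric positive definite, S ∈ ℝ^{n×n}, h > 0, A = h S M, a fixed vector g ∈ ℝ^n, and (zⁿ, rⁿ), define zⁿ⁺¹ = e^A zⁿ + h φ₁(A) S f, rⁿ⁺¹ = rⁿ + ½ gᵀ (zⁿ⁺¹ − zⁿ), where f = ½(rⁿ⁺¹ + rⁿ) g. Then the modified energy H̃(z, r) = ½ zᵀ M z + r² − C satisfies: H̃(zⁿ⁺¹, rⁿ⁺¹) = H̃(zⁿ, rⁿ) if S is skew-symmetric, and H̃(zⁿ⁺¹, rⁿ⁺¹) ≤ H̃(zⁿ, rⁿ) if the symmetric part of S is negative semidefinite. -/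
open Matrix

noncomputable def phi1 {n : ℕ} (A : Matrix (Fin n) (Fin n) ℝ) : Matrix (Fin n) (Fin n) ℝ :=
  ∑' k : ℕ, (((k + 1).factorial : ℝ))⁻¹ • A ^ k

/-- the modified SAV energy `H̃(z,r) = ½ zᵀMz + r² − C` -/
noncomputable def modEnergy {n : ℕ} (M : Matrix (Fin n) (Fin n) ℝ) (C : ℝ)
    (z : Fin n → ℝ) (r : ℝ) : ℝ :=
  (1/2 : ℝ) * (z ⬝ᵥ M.mulVec z) + r ^ 2 - C

section Aux

open NormedSpace

lemma phi1_summable {n : ℕ} (A : Matrix (Fin n) (Fin n) ℝ) :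
    letI : SeminormedRing (Matrix (Fin n) (Fin n) ℝ) := Matrix.linftyOpSemiNormedRing
    letI : NormedRing (Matrix (Fin n) (Fin n) ℝ) := Matrix.linftyOpNormedRing
    letI : NormedAlgebra ℝ (Matrix (Fin n) (Fin n) ℝ) := Matrix.linftyOpNormedAlgebra
    Summable (fun k : ℕ => (((k + 1).factorial : ℝ))⁻¹ • A ^ k) := by
  letI : SeminormedRing (Matrix (Fin n) (Fin n) ℝ) := Matrix.linftyOpSemiNormedRing
  letI : NormedRing (Matrix (Fin n) (Fin n) ℝ) := Matrix.linftyOpNormedRing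
  letI : NormedAlgebra ℝ (Matrix (Fin n) (Fin n) ℝ) := Matrix.linftyOpNormedAlgebra
  apply Summable.of_norm_bounded (NormedSpace.norm_expSeries_summable' (𝕂 := ℝ) A)
  intro k
  rw [norm_smul, norm_smul]
  gcongr
  rw [Real.norm_eq_abs, Real.norm_eq_abs, abs_inv, abs_inv]
  apply inv_anti₀
  · positivity
  · rw [abs_of_nonneg (by positivity), abs_of_nonneg (by positivity)]
    exact_mod_cast Nat.factorial_le (Nat.le_succ k)

lemma mul_phi1 {n : ℕ} (A : Matrix (Fin n) (Fin n) ℝ) :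
    A * phi1 A = exp A - 1 := by
  letI : SeminormedRing (Matrix (Fin n) (Fin n) ℝ) := Matrix.linftyOpSemiNormedRing
  letI : NormedRing (Matrix (Fin n) (Fin n) ℝ) := Matrix.linftyOpNormedRing
  letI : NormedAlgebra ℝ (Matrix (Fin n) (Fin n) ℝ) := Matrix.linftyOpNormedAlgebra
  have hs := phi1_summable A
  have h1 : A * phi1 A = ∑' k : ℕ, (((k + 1).factorial : ℝ))⁻¹ • A ^ (k + 1) := by
    rw [phi1, ← Summable.tsum_mul_left A hs]
    congr 1; ext k
    rw [mul_smul_comm, ← pow_succ']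
  rw [h1, eq_sub_iff_add_eq, NormedSpace.exp_eq_tsum ℝ]
  beta_reduce
  have hs2 : Summable (fun k : ℕ => ((k.factorial : ℝ))⁻¹ • A ^ k) :=
    NormedSpace.expSeries_summable' (𝕂 := ℝ) A
  rw [Summable.tsum_eq_zero_add hs2]
  simp [add_comm]

lemma phi1_mul {n : ℕ} (A : Matrix (Fin n) (Fin n) ℝ) :
    phi1 A * A = exp A - 1 := by
  letI : SeminormedRing (Matrix (Fin n) (Fin n) ℝ) := Matrix.linftyOpSemiNormedRing
  letI : NormedRing (Matrix (Fin n) (Fin n) ℝ) := Matrix.linftyOpNormedRing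
  letI : NormedAlgebra ℝ (Matrix (Fin n) (Fin n) ℝ) := Matrix.linftyOpNormedAlgebra
  have hs := phi1_summable A
  rw [← mul_phi1, phi1, ← Summable.tsum_mul_left A hs, ← Summable.tsum_mul_right _ hs]
  congr 1; ext k
  rw [smul_mul_assoc, mul_smul_comm, ← pow_succ, ← pow_succ']

/-- pairing: `(Au)ᵀ B u = uᵀ (AᵀB) u` -/
lemma pairing {n : ℕ} (A B : Matrix (Fin n) (Fin n) ℝ) (u : Fin n → ℝ) :
    (A.mulVec u) ⬝ᵥ B.mulVec u = u ⬝ᵥ (Aᵀ*B).mulVec u := by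
  conv_rhs => rw [← mulVec_mulVec, dotProduct_mulVec, vecMul_transpose]

lemma flow_hasDerivAt {n : ℕ} (A : Matrix (Fin n) (Fin n) ℝ) (x : Fin n → ℝ) (t : ℝ) :
    HasDerivAt (fun t : ℝ => (exp (t • A)).mulVec x)
      (A.mulVec ((exp (t • A)).mulVec x)) t := by
  letI : SeminormedRing (Matrix (Fin n) (Fin n) ℝ) := Matrix.linftyOpSemiNormedRing
  letI : NormedRing (Matrix (Fin n) (Fin n) ℝ) := Matrix.linftyOpNormedRing
  letI : NormedAlgebra ℝ (Matrix (Fin n) (Fin n) ℝ) := Matrix.linftyOpNormedAlgebra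
  have hE : HasDerivAt (fun u : ℝ => exp (u • A)) (A * exp (t • A)) t :=
    hasDerivAt_exp_smul_const' A t
  let L : Matrix (Fin n) (Fin n) ℝ →ₗ[ℝ] (Fin n → ℝ) :=
    { toFun := fun B => B.mulVec x
      map_add' := fun B C => Matrix.add_mulVec B C x
      map_smul' := fun c B => Matrix.smul_mulVec c B x }
  have := (LinearMap.toContinuousLinearMap L).hasFDerivAt.comp_hasDerivAt t hE
  exact this.congr_deriv (by rw [Matrix.mulVec_mulVec]; rfl)

/-- `AᵀM + MA = 2h • M (symPart S) M` for `A = h•(S*M)` when `Mᵀ = M`. -/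
lemma lyapunov_id {n : ℕ} (M S : Matrix (Fin n) (Fin n) ℝ) (hMsymm : Mᵀ = M) (h : ℝ) :
    (h • (S*M))ᵀ * M + M * (h • (S*M)) = (2*h) • (M * symPart S * M) := by
  simp only [symPart, transpose_smul, transpose_mul, hMsymm, smul_mul_assoc,
    Matrix.mul_smul, smul_add, Matrix.add_mul, Matrix.mul_add, smul_smul, Matrix.mul_assoc]
  module

/-- dissipation: the quadratic form `xᵀ M x` does not increase along the exponential flow -/
lemma flow_quad_le {n : ℕ} (M S : Matrix (Fin n) (Fin n) ℝ) (hMsymm : Mᵀ = M)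
    (h : ℝ) (hh : 0 < h) (hNSD : ∀ y : Fin n → ℝ, y ⬝ᵥ (symPart S).mulVec y ≤ 0)
    (x : Fin n → ℝ) :
    ((exp (h • (S*M))).mulVec x) ⬝ᵥ M.mulVec ((exp (h • (S*M))).mulVec x)
      ≤ x ⬝ᵥ M.mulVec x := by
  set A : Matrix (Fin n) (Fin n) ℝ := h • (S*M) with hA
  set v : ℝ → (Fin n → ℝ) := fun t => (exp (t • A)).mulVec x with hv
  have hvD : ∀ t, HasDerivAt v (A.mulVec (v t)) t := fun t => flow_hasDerivAt A x t
  have hvi : ∀ t (i : Fin n), HasDerivAt (fun t => v t i) (A.mulVec (v t) i) t := by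
    intro t i
    exact (hasDerivAt_pi.mp (hvD t)) i
  set φ : ℝ → ℝ := fun t => v t ⬝ᵥ M.mulVec (v t) with hφ
  have hφeq : ∀ t, φ t = ∑ i, ∑ j, v t i * (M i j * v t j) := by
    intro t; simp [hφ, dotProduct, mulVec, Finset.mul_sum]
  have hφD : ∀ t, HasDerivAt φ
      ((A.mulVec (v t)) ⬝ᵥ M.mulVec (v t) + v t ⬝ᵥ M.mulVec (A.mulVec (v t))) t := by
    intro t
    have hD : HasDerivAt (fun t => ∑ i, ∑ j, v t i * (M i j * v t j))
        (∑ i, ∑ j, (A.mulVec (v t) i * (M i j * v t j)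
          + v t i * (M i j * A.mulVec (v t) j))) t := by
      apply HasDerivAt.fun_sum; intro i _
      apply HasDerivAt.fun_sum; intro j _
      exact (hvi t i).mul ((hvi t j).const_mul (M i j))
    have : (fun t => ∑ i, ∑ j, v t i * (M i j * v t j)) = φ := by
      funext t; rw [hφeq t]
    rw [this] at hD
    convert hD using 1
    simp [dotProduct, mulVec, Finset.mul_sum, Finset.sum_add_distrib]
  have hneg : ∀ t, (A.mulVec (v t)) ⬝ᵥ M.mulVec (v t)
      + v t ⬝ᵥ M.mulVec (A.mulVec (v t)) ≤ 0 := by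
    intro t
    set u := v t
    have h1 : (A.mulVec u) ⬝ᵥ M.mulVec u = u ⬝ᵥ (Aᵀ*M).mulVec u := pairing A M u
    have h2 : u ⬝ᵥ M.mulVec (A.mulVec u) = u ⬝ᵥ (M*A).mulVec u := by
      rw [← mulVec_mulVec]
    have hsum : (A.mulVec u) ⬝ᵥ M.mulVec u + u ⬝ᵥ M.mulVec (A.mulVec u)
        = (2*h) * (u ⬝ᵥ (M * symPart S * M).mulVec u) := by
      rw [h1, h2, ← dotProduct_add, ← Matrix.add_mulVec, hA, lyapunov_id M S hMsymm h,
        smul_mulVec, dotProduct_smul, smul_eq_mul]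
    have hquad : u ⬝ᵥ (M * symPart S * M).mulVec u
        = (M.mulVec u) ⬝ᵥ (symPart S).mulVec (M.mulVec u) := by
      rw [Matrix.mul_assoc, ← mulVec_mulVec, dotProduct_mulVec,
        ← hMsymm, vecMul_transpose, hMsymm, ← mulVec_mulVec]
    rw [hsum, hquad]
    have := hNSD (M.mulVec (v t))
    nlinarith
  have hanti : Antitone φ :=
    antitone_of_deriv_nonpos (fun t => (hφD t).differentiableAt)
      (fun t => by rw [(hφD t).deriv]; exact hneg t)
  have h01 : φ 1 ≤ φ 0 := hanti zero_le_one
  have he0 : φ 0 = x ⬝ᵥ M.mulVec x := by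
    simp [hφ, hv, NormedSpace.exp_zero]
  have he1 : φ 1 = ((exp A).mulVec x) ⬝ᵥ M.mulVec ((exp A).mulVec x) := by
    simp [hφ, hv]
  rw [← he1, ← he0]; exact h01

/-- conservation: for skew `S`, the flow conserves the quadratic form. -/
lemma flow_quad_eq {n : ℕ} (M S : Matrix (Fin n) (Fin n) ℝ) (hMsymm : Mᵀ = M)
    (hMdet : IsUnit M.det) (h : ℝ) (hS : Sᵀ = -S) (x : Fin n → ℝ) :
    ((exp (h • (S*M))).mulVec x) ⬝ᵥ M.mulVec ((exp (h • (S*M))).mulVec x)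
      = x ⬝ᵥ M.mulVec x := by
  set A : Matrix (Fin n) (Fin n) ℝ := h • (S*M) with hA
  set E : Matrix (Fin n) (Fin n) ℝ := exp A with hE
  have hMM : M * M⁻¹ = 1 := Matrix.mul_nonsing_inv M hMdet
  have hAT : Aᵀ = M * (-A) * M⁻¹ := by
    rw [hA]
    simp only [transpose_smul, transpose_mul, hMsymm, hS, Matrix.mul_smul, smul_mul_assoc,
      neg_smul, Matrix.mul_neg, Matrix.neg_mul, smul_neg]
    rw [Matrix.mul_assoc M (S*M) M⁻¹, Matrix.mul_assoc S M M⁻¹, hMM, Matrix.mul_one]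
  have hET : Eᵀ = M * exp (-A) * M⁻¹ := by
    rw [hE, ← Matrix.exp_transpose, hAT,
      Matrix.exp_conj M (-A) ((Matrix.isUnit_iff_isUnit_det M).2 hMdet)]
  have hEinv : exp (-A) * E = 1 := by
    rw [Matrix.exp_neg, hE]
    exact Matrix.nonsing_inv_mul _ ((Matrix.isUnit_iff_isUnit_det _).1 (Matrix.isUnit_exp A))
  have hconj : Eᵀ * M * E = M := by
    rw [hET]
    calc M * exp (-A) * M⁻¹ * M * E
        = M * exp (-A) * (M⁻¹ * M) * E := by rw [Matrix.mul_assoc (M * exp (-A)) M⁻¹ M]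
      _ = M * (exp (-A) * E) := by
          rw [Matrix.nonsing_inv_mul M hMdet, Matrix.mul_one, Matrix.mul_assoc]
      _ = M := by rw [hEinv, Matrix.mul_one]
  calc (E.mulVec x) ⬝ᵥ M.mulVec (E.mulVec x)
      = (E.mulVec x) ⬝ᵥ (M*E).mulVec x := by rw [← mulVec_mulVec]
    _ = x ⬝ᵥ (Eᵀ*(M*E)).mulVec x := pairing E (M*E) x
    _ = x ⬝ᵥ M.mulVec x := by rw [← Matrix.mul_assoc, hconj]

end Aux

/-- one step of EISAV,
`zⁿ⁺¹ = e^A zⁿ + h φ₁(A) S f`, `rⁿ⁺¹ = rⁿ + ½ gᵀ(zⁿ⁺¹ − zⁿ)`, `f = ½(rⁿ⁺¹+rⁿ)g`,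
conserves the modified energy `H̃` when `S` is skew-symmetric, and dissipates it
when the symmetric part of `S` is negative semidefinite. -/
theorem stmt10 {n : ℕ} (M S : Matrix (Fin n) (Fin n) ℝ)
    (hMsymm : Mᵀ = M) (hMpd : M.PosDef)
    (h : ℝ) (hh : 0 < h) (g : Fin n → ℝ) (C : ℝ)
    (zn zn1 : Fin n → ℝ) (rn rn1 : ℝ) (f : Fin n → ℝ)
    (hf : f = ((rn1 + rn) / 2) • g)
    (hzstep : zn1 = (NormedSpace.exp (h • (S * M))).mulVec zn
      + h • (phi1 (h • (S * M))).mulVec (S.mulVec f))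
    (hrstep : rn1 = rn + (1/2 : ℝ) * (g ⬝ᵥ (zn1 - zn))) :
    (Sᵀ = -S → modEnergy M C zn1 rn1 = modEnergy M C zn rn)
    ∧ (NegSemidef (symPart S) → modEnergy M C zn1 rn1 ≤ modEnergy M C zn rn) := by
  set A : Matrix (Fin n) (Fin n) ℝ := h • (S * M) with hA
  set E : Matrix (Fin n) (Fin n) ℝ := NormedSpace.exp A with hE
  have hMdet : IsUnit M.det := isUnit_iff_ne_zero.2 hMpd.det_pos.ne'
  have hMM : M * M⁻¹ = 1 := Matrix.mul_nonsing_inv M hMdet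
  set u : Fin n → ℝ := M⁻¹.mulVec f with hu
  have hMu : M.mulVec u = f := by rw [hu, mulVec_mulVec, hMM, one_mulVec]
  -- the affine flow identity: zn1 + u = E (zn + u)
  have hterm : h • (phi1 A).mulVec (S.mulVec f) = E.mulVec u - u := by
    have h1 : h • (phi1 A).mulVec (S.mulVec f) = (h • (phi1 A * S)).mulVec f := by
      rw [mulVec_mulVec, smul_mulVec]
    have h2 : h • (phi1 A * S) = phi1 A * A * M⁻¹ := by
      rw [Matrix.mul_assoc, hA, smul_mul_assoc, Matrix.mul_assoc S M M⁻¹, hMM,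
        Matrix.mul_one, Matrix.mul_smul]
    have h3 : phi1 A * A * M⁻¹ = (E - 1) * M⁻¹ := by rw [phi1_mul, hE]
    rw [h1, h2, h3, Matrix.sub_mul, Matrix.one_mul, Matrix.sub_mulVec, mulVec_mulVec, hu]
  have hstep : zn1 + u = E.mulVec (zn + u) := by
    rw [hzstep, hterm, mulVec_add]
    abel
  -- r identity
  have hr : rn1 ^ 2 - rn ^ 2 = f ⬝ᵥ (zn1 - zn) := by
    have h2 : g ⬝ᵥ (zn1 - zn) = 2 * (rn1 - rn) := by
      rw [hrstep]; ring_nf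
    rw [hf, smul_dotProduct, h2, smul_eq_mul]
    ring
  -- quadratic expansion
  have hq : ∀ z : Fin n → ℝ, (z + u) ⬝ᵥ M.mulVec (z + u)
      = z ⬝ᵥ M.mulVec z + 2 * (f ⬝ᵥ z) + u ⬝ᵥ f := by
    intro z
    have huMz : u ⬝ᵥ M.mulVec z = f ⬝ᵥ z := by
      rw [dotProduct_mulVec, ← hMsymm, vecMul_transpose, hMu]
    rw [mulVec_add, dotProduct_add, add_dotProduct, add_dotProduct, hMu, huMz,
      dotProduct_comm z f]
    ring
  -- energy difference identity
  have hkey : modEnergy M C zn1 rn1 - modEnergy M C zn rn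
      = (1/2 : ℝ) * ((zn1 + u) ⬝ᵥ M.mulVec (zn1 + u) - (zn + u) ⬝ᵥ M.mulVec (zn + u)) := by
    have hr' : rn1 ^ 2 - rn ^ 2 = f ⬝ᵥ zn1 - f ⬝ᵥ zn := by rw [hr, dotProduct_sub]
    rw [modEnergy, modEnergy, hq zn1, hq zn]
    linarith
  constructor
  · intro hS
    have := flow_quad_eq M S hMsymm hMdet h hS (zn + u)
    rw [← hstep] at this
    rw [hE, hA] at *
    linarith [hkey, this]
  · intro hNSD
    have := flow_quad_le M S hMsymm h hh hNSD.2 (zn + u)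
    rw [← hstep] at this
    linarith [hkey, this]
end

section
/- Consider one step of the EILM scheme: zⁿ⁺¹ = e^A zⁿ + h φ₁(A) S η ∇V(ẑ) together with the constraint V(zⁿ⁺¹) − V(zⁿ) = η ∇V(ẑ)ᵀ (zⁿ⁺¹ − zⁿ), where A = h S M, M is symmetric positive definite, η ∈ ℝ, and ẑ ∈ ℝ^n is fixed. Then the discrete energy H(z) = ½ zᵀ M z + V(z) satisfies: H(zⁿ⁺¹) = H(zⁿ) if S is skew-symmetric, and H(zⁿ⁺¹) ≤ H(zⁿ) if the symmetric part of S is negative semidefinite. -/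
open Matrix

/-- `exp B = 1 + φ₁(B) * B`. -/
theorem exp_phi1 {n : ℕ} (B : Matrix (Fin n) (Fin n) ℝ) :
    NormedSpace.exp B = 1 + phi1 B * B := by
  letI : SeminormedRing (Matrix (Fin n) (Fin n) ℝ) := Matrix.linftyOpSemiNormedRing
  letI : NormedRing (Matrix (Fin n) (Fin n) ℝ) := Matrix.linftyOpNormedRing
  letI : NormedAlgebra ℝ (Matrix (Fin n) (Fin n) ℝ) := Matrix.linftyOpNormedAlgebra
  have hsum : Summable (fun k : ℕ => ((k.factorial : ℝ))⁻¹ • B ^ k) :=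
    NormedSpace.expSeries_summable' (𝕂 := ℝ) B
  have hsum2 : Summable (fun k : ℕ => (((k + 1).factorial : ℝ))⁻¹ • B ^ k) := by
    apply Summable.of_norm
    refine Summable.of_nonneg_of_le (fun k => norm_nonneg _) (fun k => ?_)
      (NormedSpace.norm_expSeries_summable' (𝕂 := ℝ) B)
    rw [norm_smul, norm_smul]
    gcongr
    rw [Real.norm_eq_abs, Real.norm_eq_abs, abs_of_nonneg (by positivity),
      abs_of_nonneg (by positivity)]
    apply inv_anti₀ (by positivity)
    exact_mod_cast Nat.factorial_le (Nat.le_succ k)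
  rw [NormedSpace.exp_eq_tsum ℝ]; beta_reduce
  rw [Summable.tsum_eq_zero_add hsum]
  congr 1
  · simp
  · have e : ∀ k : ℕ, ((((k + 1).factorial : ℝ))⁻¹ • B ^ (k + 1))
        = ((((k + 1).factorial : ℝ))⁻¹ • B ^ k) * B := by
      intro k; rw [pow_succ, smul_mul_assoc]
    calc ∑' k : ℕ, (((k + 1).factorial : ℝ))⁻¹ • B ^ (k + 1)
        = ∑' k : ℕ, ((((k + 1).factorial : ℝ))⁻¹ • B ^ k) * B := by simp_rw [e]
      _ = phi1 B * B := hsum2.tsum_mul_right B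

/-- Derivative of `t ↦ exp(tA) *ᵥ x`. -/
theorem hasDerivAt_exp_mulVec {n : ℕ} (A : Matrix (Fin n) (Fin n) ℝ) (x : Fin n → ℝ) (t : ℝ) :
    HasDerivAt (fun s : ℝ => NormedSpace.exp (s • A) *ᵥ x)
      (A *ᵥ (NormedSpace.exp (t • A) *ᵥ x)) t := by
  letI : SeminormedRing (Matrix (Fin n) (Fin n) ℝ) := Matrix.linftyOpSemiNormedRing
  letI : NormedRing (Matrix (Fin n) (Fin n) ℝ) := Matrix.linftyOpNormedRing
  letI : NormedAlgebra ℝ (Matrix (Fin n) (Fin n) ℝ) := Matrix.linftyOpNormedAlgebra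
  have hE : HasDerivAt (fun s : ℝ => NormedSpace.exp (s • A))
      (A * NormedSpace.exp (t • A)) t := hasDerivAt_exp_smul_const' A t
  let L : Matrix (Fin n) (Fin n) ℝ →ₗ[ℝ] (Fin n → ℝ) :=
    { toFun := fun B => B *ᵥ x
      map_add' := fun B C => Matrix.add_mulVec B C x
      map_smul' := fun c B => Matrix.smul_mulVec c B x }
  let Lc := LinearMap.toContinuousLinearMap L
  have := Lc.hasFDerivAt.comp_hasDerivAt t hE
  have e : Lc (A * NormedSpace.exp (t • A)) = A *ᵥ (NormedSpace.exp (t • A) *ᵥ x) := by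
    show (A * NormedSpace.exp (t • A)) *ᵥ x = _; rw [Matrix.mulVec_mulVec]
  rw [← e]; exact this

/-- Derivative of the quadratic form along a differentiable curve. -/
theorem quad_deriv {n : ℕ} (M : Matrix (Fin n) (Fin n) ℝ) {y : ℝ → Fin n → ℝ} {d : Fin n → ℝ}
    {t : ℝ} (hy : HasDerivAt y d t) :
    HasDerivAt (fun s => y s ⬝ᵥ M *ᵥ y s) (d ⬝ᵥ M *ᵥ y t + y t ⬝ᵥ M *ᵥ d) t := by
  have hyi : ∀ i, HasDerivAt (fun s => y s i) (d i) t := fun i => (hasDerivAt_pi.mp hy) i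
  have inner : ∀ i, HasDerivAt (fun s => ∑ j, M i j * y s j) (∑ j, M i j * d j) t :=
    fun i => HasDerivAt.fun_sum (fun j _ => (hyi j).const_mul (M i j))
  have main : HasDerivAt (fun s => ∑ i, y s i * (∑ j, M i j * y s j))
      (∑ i, (d i * (∑ j, M i j * y t j) + y t i * (∑ j, M i j * d j))) t :=
    HasDerivAt.fun_sum (fun i _ => (hyi i).mul (inner i))
  have e1 : (fun s => y s ⬝ᵥ M *ᵥ y s) = fun s => ∑ i, y s i * (∑ j, M i j * y s j) := by
    funext s; simp [dotProduct, Matrix.mulVec]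
  have e2 : d ⬝ᵥ M *ᵥ y t + y t ⬝ᵥ M *ᵥ d
      = ∑ i, (d i * (∑ j, M i j * y t j) + y t i * (∑ j, M i j * d j)) := by
    simp [dotProduct, Matrix.mulVec, Finset.sum_add_distrib]
  rw [e1, e2]; exact main

/-- one step of EILM,
`zⁿ⁺¹ = e^A zⁿ + h φ₁(A) S η ∇V(ẑ)` with the constraint
`V(zⁿ⁺¹) − V(zⁿ) = η ∇V(ẑ)ᵀ(zⁿ⁺¹ − zⁿ)`, conserves the discrete energy
`H(z) = ½ zᵀMz + V(z)` when `S` is skew-symmetric, and dissipates it when the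
symmetric part of `S` is negative semidefinite. -/
theorem stmt12 {n : ℕ} (M S : Matrix (Fin n) (Fin n) ℝ)
    (hMsymm : Mᵀ = M) (hMpd : M.PosDef)
    (V : (Fin n → ℝ) → ℝ) (gradV : (Fin n → ℝ) → (Fin n → ℝ))
    (hV : ∀ z, HasFDerivAt V (dotCLM (gradV z)) z)
    (h : ℝ) (hh : 0 < h) (η : ℝ) (zhat : Fin n → ℝ)
    (zn zn1 : Fin n → ℝ)
    (hzstep : zn1 = (NormedSpace.exp (h • (S * M))).mulVec zn
      + (h * η) • (phi1 (h • (S * M))).mulVec (S.mulVec (gradV zhat)))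
    (hconstraint : V zn1 - V zn = η * (gradV zhat ⬝ᵥ (zn1 - zn))) :
    (Sᵀ = -S →
      (1/2 : ℝ) * (zn1 ⬝ᵥ M.mulVec zn1) + V zn1
        = (1/2 : ℝ) * (zn ⬝ᵥ M.mulVec zn) + V zn)
    ∧ (NegSemidef (symPart S) →
      (1/2 : ℝ) * (zn1 ⬝ᵥ M.mulVec zn1) + V zn1
        ≤ (1/2 : ℝ) * (zn ⬝ᵥ M.mulVec zn) + V zn) := by
  classical
  set g : Fin n → ℝ := gradV zhat with hg
  set A : Matrix (Fin n) (Fin n) ℝ := h • (S * M) with hA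
  set ft : Fin n → ℝ := η • (M⁻¹ *ᵥ g) with hft
  set w : Fin n → ℝ := zn + ft with hw
  have hMdet : IsUnit M.det := isUnit_iff_ne_zero.mpr hMpd.det_pos.ne'
  have hMinv : M * M⁻¹ = 1 := Matrix.mul_nonsing_inv M hMdet
  have hMft : M *ᵥ ft = η • g := by
    rw [hft, Matrix.mulVec_smul, Matrix.mulVec_mulVec, hMinv, Matrix.one_mulVec]
  -- the conjugated step identity  zⁿ⁺¹ + f̃ = e^A (zⁿ + f̃)
  have hAft : A *ᵥ ft = (h * η) • (S *ᵥ g) := by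
    rw [hA, Matrix.smul_mulVec, ← Matrix.mulVec_mulVec, hMft, Matrix.mulVec_smul,
      smul_smul]
  have hstep : zn1 + ft = NormedSpace.exp A *ᵥ w := by
    have hexpft : NormedSpace.exp A *ᵥ ft = ft + (h * η) • (phi1 A *ᵥ (S *ᵥ g)) := by
      rw [exp_phi1 A, Matrix.add_mulVec, Matrix.one_mulVec, ← Matrix.mulVec_mulVec, hAft,
        Matrix.mulVec_smul]
    rw [hw, Matrix.mulVec_add, hexpft, hzstep]
    abel
  -- symmetric-matrix dot product manipulation
  have hdotM : ∀ u v : Fin n → ℝ, u ⬝ᵥ M *ᵥ v = (M *ᵥ u) ⬝ᵥ v := by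
    intro u v
    rw [Matrix.dotProduct_mulVec, ← Matrix.mulVec_transpose, hMsymm]
  have hquadT : ∀ v : Fin n → ℝ, v ⬝ᵥ Sᵀ *ᵥ v = v ⬝ᵥ S *ᵥ v := by
    intro v
    rw [Matrix.dotProduct_mulVec, Matrix.vecMul_transpose, dotProduct_comm]
  -- energy rearrangement
  have henergy : ∀ z : Fin n → ℝ,
      (z + ft) ⬝ᵥ M *ᵥ (z + ft) = z ⬝ᵥ M *ᵥ z + 2 * (η * (g ⬝ᵥ z)) + ft ⬝ᵥ M *ᵥ ft := by
    intro z
    have h1 : ft ⬝ᵥ M *ᵥ z = η * (g ⬝ᵥ z) := by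
      rw [hdotM, hMft, smul_dotProduct, smul_eq_mul]
    have h2 : z ⬝ᵥ M *ᵥ ft = η * (g ⬝ᵥ z) := by
      rw [hMft, dotProduct_smul, smul_eq_mul, dotProduct_comm]
    rw [add_dotProduct, Matrix.mulVec_add, dotProduct_add, dotProduct_add,
      h1, h2]
    ring
  -- the quadratic form along the flow
  set q : ℝ → ℝ := fun s => (NormedSpace.exp (s • A) *ᵥ w) ⬝ᵥ M *ᵥ (NormedSpace.exp (s • A) *ᵥ w)
    with hqdef
  have hq : ∀ t : ℝ, HasDerivAt q
      (2 * h * ((M *ᵥ (NormedSpace.exp (t • A) *ᵥ w)) ⬝ᵥ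
        S *ᵥ (M *ᵥ (NormedSpace.exp (t • A) *ᵥ w)))) t := by
    intro t
    set y : Fin n → ℝ := NormedSpace.exp (t • A) *ᵥ w with hy
    set m : Fin n → ℝ := M *ᵥ y with hm
    have hd := quad_deriv M (hasDerivAt_exp_mulVec A w t)
    have hAy : A *ᵥ y = h • (S *ᵥ m) := by
      rw [hA, Matrix.smul_mulVec, ← Matrix.mulVec_mulVec, hm]
    have hval : (A *ᵥ y) ⬝ᵥ M *ᵥ y + y ⬝ᵥ M *ᵥ (A *ᵥ y) = 2 * h * (m ⬝ᵥ S *ᵥ m) := by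
      rw [hAy, smul_dotProduct, Matrix.mulVec_smul, dotProduct_smul, ← hm,
        dotProduct_comm, hdotM y (S *ᵥ m), ← hm]
      simp only [smul_eq_mul]
      ring
    rw [← hval]
    exact hd
  have hq0 : q 0 = w ⬝ᵥ M *ᵥ w := by
    simp [hqdef, NormedSpace.exp_zero, Matrix.one_mulVec]
  have hq1 : q 1 = (zn1 + ft) ⬝ᵥ M *ᵥ (zn1 + ft) := by
    rw [hstep]; simp [hqdef, one_smul]
  -- relation between energy difference and q 1 - q 0
  have hc : V zn1 - V zn = η * (g ⬝ᵥ zn1) - η * (g ⬝ᵥ zn) := by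
    rw [hconstraint, dotProduct_sub]; ring
  have hrel : (1/2 : ℝ) * (zn1 ⬝ᵥ M *ᵥ zn1) + V zn1 - ((1/2 : ℝ) * (zn ⬝ᵥ M *ᵥ zn) + V zn)
      = (1/2 : ℝ) * (q 1 - q 0) := by
    rw [hq1, hq0, hw, henergy zn1, henergy zn]
    linarith [hc]
  constructor
  · intro hskew
    have hzero : ∀ v : Fin n → ℝ, v ⬝ᵥ S *ᵥ v = 0 := by
      intro v
      have := hquadT v
      rw [hskew, Matrix.neg_mulVec, dotProduct_neg] at this
      linarith
    have hd0 : ∀ t : ℝ, deriv q t = 0 := by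
      intro t
      rw [(hq t).deriv, hzero]
      ring
    have hconst : q 1 = q 0 :=
      is_const_of_deriv_eq_zero (fun t => (hq t).differentiableAt) hd0 1 0
    have : (1/2 : ℝ) * (zn1 ⬝ᵥ M *ᵥ zn1) + V zn1 - ((1/2 : ℝ) * (zn ⬝ᵥ M *ᵥ zn) + V zn) = 0 := by
      rw [hrel, hconst]; ring
    linarith
  · intro hnsd
    have hSsym : ∀ v : Fin n → ℝ, v ⬝ᵥ S *ᵥ v = v ⬝ᵥ (symPart S) *ᵥ v := by
      intro v
      rw [symPart, Matrix.smul_mulVec, dotProduct_smul, Matrix.add_mulVec,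
        dotProduct_add, hquadT v, smul_eq_mul]
      ring
    have hderiv_le : ∀ t : ℝ, deriv q t ≤ 0 := by
      intro t
      rw [(hq t).deriv]
      have hle := hnsd.2 (M *ᵥ (NormedSpace.exp (t • A) *ᵥ w))
      have := hSsym (M *ᵥ (NormedSpace.exp (t • A) *ᵥ w))
      nlinarith
    have hmono : Antitone q :=
      antitone_of_deriv_nonpos (fun t => (hq t).differentiableAt) hderiv_le
    have hle := hmono (zero_le_one (α := ℝ))
    linarith [hrel, hle]
end

section
/- Let S be skew-symmetric and M symmetric positive definite, and let the Crank–Nicolson SAV step be (zⁿ⁺¹ − zⁿ)/h = S μ, with μ = M (zⁿ⁺¹+zⁿ)/2 + r̄ g, rⁿ⁺¹ − rⁿ = ½ gᵀ (zⁿ⁺¹ − zⁿ), where g ∈ ℝ^n is fixed and r̄ = (rⁿ⁺¹+rⁿ)/2. Then the discrete modified energy H̃(z,r) = ½ zᵀ M z + r² − C is exactly conserved: H̃(zⁿ⁺¹, rⁿ⁺¹) = H̃(zⁿ, rⁿ). If instead the symmetric part of S is negative semidefinite, then H̃(zⁿ⁺¹, rⁿ⁺¹) − H̃(zⁿ, rⁿ)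 = h μᵀ S μ ≤ 0. -/
open Matrix

/-- the Crank–Nicolson SAV step
`(zⁿ⁺¹ − zⁿ)/h = Sμ`, `μ = M(zⁿ⁺¹+zⁿ)/2 + r̄ g`, `rⁿ⁺¹ − rⁿ = ½ gᵀ(zⁿ⁺¹ − zⁿ)`,
conserves `H̃(z,r) = ½ zᵀMz + r² − C` when `S` is skew-symmetric; and when the
symmetric part of `S` is negative semidefinite,
`H̃(zⁿ⁺¹,rⁿ⁺¹) − H̃(zⁿ,rⁿ) = h μᵀSμ ≤ 0`. -/
theorem stmt17 {n : ℕ} (M S : Matrix (Fin n) (Fin n) ℝ)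
    (hMsymm : Mᵀ = M) (hMpd : M.PosDef)
    (h : ℝ) (hh : 0 < h) (g : Fin n → ℝ) (C : ℝ)
    (zn zn1 μ : Fin n → ℝ) (rn rn1 : ℝ)
    (hzstep : (h⁻¹ : ℝ) • (zn1 - zn) = S.mulVec μ)
    (hμ : μ = M.mulVec ((1/2 : ℝ) • (zn1 + zn)) + ((rn1 + rn) / 2) • g)
    (hrstep : rn1 - rn = (1/2 : ℝ) * (g ⬝ᵥ (zn1 - zn))) :
    (Sᵀ = -S → modEnergy M C zn1 rn1 = modEnergy M C zn rn)
    ∧ (NegSemidef (symPart S) →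
        modEnergy M C zn1 rn1 - modEnergy M C zn rn = h * (μ ⬝ᵥ S.mulVec μ)
        ∧ modEnergy M C zn1 rn1 ≤ modEnergy M C zn rn) := by
  have hz : zn1 - zn = h • S.mulVec μ := by
    rw [← hzstep, smul_smul, mul_inv_cancel₀ hh.ne', one_smul]
  have hsym : zn ⬝ᵥ M.mulVec zn1 = zn1 ⬝ᵥ M.mulVec zn := by
    rw [dotProduct_mulVec, ← mulVec_transpose, hMsymm, dotProduct_comm]
  have hdot : μ ⬝ᵥ (zn1 - zn) =
      modEnergy M C zn1 rn1 - modEnergy M C zn rn := by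
    simp only [modEnergy, hμ, add_dotProduct, smul_dotProduct, dotProduct_sub,
      dotProduct_add, dotProduct_smul, mulVec_smul, mulVec_add,
      smul_eq_mul]
    have hg : g ⬝ᵥ zn1 - g ⬝ᵥ zn = 2 * (rn1 - rn) := by
      rw [hrstep, ← dotProduct_sub]; ring
    have a : M.mulVec zn1 ⬝ᵥ zn1 = zn1 ⬝ᵥ M.mulVec zn1 := dotProduct_comm _ _
    have b : M.mulVec zn ⬝ᵥ zn1 = zn1 ⬝ᵥ M.mulVec zn := dotProduct_comm _ _
    have c : M.mulVec zn1 ⬝ᵥ zn = zn1 ⬝ᵥ M.mulVec zn := by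
      rw [dotProduct_comm, hsym]
    have d : M.mulVec zn ⬝ᵥ zn = zn ⬝ᵥ M.mulVec zn := dotProduct_comm _ _
    linear_combination (1/2 : ℝ) * a + (1/2 : ℝ) * b - (1/2 : ℝ) * c
      - (1/2 : ℝ) * d + ((rn1 + rn) / 2) * hg
  have key : modEnergy M C zn1 rn1 - modEnergy M C zn rn = h * (μ ⬝ᵥ S.mulVec μ) := by
    rw [← hdot, hz, dotProduct_smul, smul_eq_mul]
  constructor
  · intro hskew
    have hq : μ ⬝ᵥ S.mulVec μ = 0 := by
      have : μ ⬝ᵥ S.mulVec μ = -(μ ⬝ᵥ S.mulVec μ) := by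
        conv_lhs => rw [dotProduct_mulVec, ← mulVec_transpose, hskew, neg_mulVec,
          neg_dotProduct, dotProduct_comm]
      linarith
    have := key
    rw [hq, mul_zero, sub_eq_zero] at this
    exact this
  · intro ⟨_, hns⟩
    have hq : μ ⬝ᵥ S.mulVec μ ≤ 0 := by
      have h1 := hns μ
      have h2 : μ ⬝ᵥ (symPart S).mulVec μ = μ ⬝ᵥ S.mulVec μ := by
        simp only [symPart, smul_mulVec, add_mulVec, dotProduct_smul,
          dotProduct_add, smul_eq_mul]
        have : μ ⬝ᵥ Sᵀ.mulVec μ = μ ⬝ᵥ S.mulVec μ := by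
          rw [mulVec_transpose, dotProduct_comm, ← dotProduct_mulVec]
        rw [this]; ring
      linarith
    refine ⟨key, ?_⟩
    nlinarith [key]
end
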